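/- Fix any c > 1/2 and a ∈ {0,1}. For every k > 0 there is a constant C(k) such that for all real x with 0 < x < 1: |W_a(x)| ≤ C(k) · x^k. -/

import Mathlib

open Complex MeasureTheory

/-- `W_a(x) = (1/2πi) ∫_{(c)} (Γ(1/4+(w+a)/2)² / Γ(1/4+a/2)²) x^w dw/w`,
parametrized by the vertical line `w = c + it`. -/
noncomputable def Wfun (c : ℝ) (a : ℕ) (x : ℝ) : ℂ :=
  ((1 / (2 * Real.pi) : ℝ) : ℂ) * ∫ t : ℝ,
    (Complex.Gamma (1 / 4 + (((c : ℂ) + t * Complex.I) + a) / 2)) ^ 2 /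
      (Complex.Gamma (1 / 4 + (a : ℂ) / 2)) ^ 2 *
      (x : ℂ) ^ ((c : ℂ) + t * Complex.I) / ((c : ℂ) + t * Complex.I)

section WfunAux
open Complex MeasureTheory Set Filter Topology

lemma abs_Gamma_le {s : ℂ} (hs : 0 < s.re) :
    ‖Complex.Gamma s‖ ≤ Real.Gamma s.re := by
  rw [Complex.Gamma_eq_integral hs, Real.Gamma_eq_integral hs]
  have h := norm_integral_le_integral_norm (μ := volume.restrict (Ioi 0))
    (f := fun x : ℝ => ((Real.exp (-x) : ℝ) : ℂ) * (x : ℂ) ^ (s - 1))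
  refine le_trans h (le_of_eq ?_)
  refine setIntegral_congr_fun measurableSet_Ioi fun x hx => ?_
  rw [norm_mul, Complex.norm_real, Real.norm_eq_abs,
    _root_.abs_of_nonneg (Real.exp_pos _).le, Complex.norm_cpow_eq_rpow_re_of_pos hx]
  simp

lemma abs_Gamma_le_div {s : ℂ} (hs : 0 < s.re) (him : s.im ≠ 0) :
    ‖Complex.Gamma s‖ ≤ Real.Gamma (s.re + 1) / |s.im| := by
  have h0 : s ≠ 0 := fun h => by simp [h] at hs
  have h1 : Complex.Gamma s = Complex.Gamma (s + 1) / s := by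
    rw [Complex.Gamma_add_one s h0]; field_simp
  rw [h1, norm_div]
  have h2 : ‖Complex.Gamma (s + 1)‖ ≤ Real.Gamma (s.re + 1) := by
    have := abs_Gamma_le (s := s + 1) (by simp; linarith)
    simpa using this
  have h3 : |s.im| ≤ ‖s‖ := Complex.abs_im_le_norm s
  have h4 : 0 < |s.im| := abs_pos.mpr him
  exact div_le_div₀ (Real.Gamma_pos_of_pos (by linarith)).le h2 h4 h3

noncomputable def gfun (a : ℕ) (x : ℝ) (w : ℂ) : ℂ :=
  Complex.Gamma (1/4 + (w + a)/2) ^ 2 * (x:ℂ) ^ w / w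

lemma zarg_eq (a : ℕ) (σ t : ℝ) :
    (1/4 + ((((σ:ℂ) + (t:ℂ)*I) + a))/2 : ℂ)
      = ((1/4 + (σ + a)/2 : ℝ) : ℂ) + ((t/2 : ℝ):ℂ) * I := by
  push_cast; ring

lemma strip_bound (c A : ℝ) (hc : 0 < c) (hcA : c ≤ A) (a : ℕ) :
    ∃ M : ℝ, 0 < M ∧ ∀ σ ∈ Icc c A, ∀ t : ℝ,
      (‖Complex.Gamma (1/4 + (((σ:ℂ) + (t:ℂ)*I) + a)/2)‖)^2 ≤ M / (1 + t^2) := by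
  have ha0 : (0:ℝ) ≤ (a:ℝ) := Nat.cast_nonneg a
  have hK : IsCompact (Icc (1/4 + c/2) (1/4 + (A + a)/2 + 1)) := isCompact_Icc
  have hcont : ContinuousOn Real.Gamma (Icc (1/4 + c/2) (1/4 + (A + a)/2 + 1)) := by
    intro u hu
    have hu0 : 0 < u := lt_of_lt_of_le (by positivity) hu.1
    refine (Real.differentiableAt_Gamma (fun m => ?_)).continuousAt.continuousWithinAt
    have : (0:ℝ) ≤ (m:ℝ) := Nat.cast_nonneg m
    intro h; rw [h] at hu0; linarith
  obtain ⟨B, hB⟩ := hK.exists_bound_of_continuousOn hcont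
  set B' : ℝ := max B 1 with hB'
  have hB'1 : (1:ℝ) ≤ B' := le_max_right _ _
  have hB'pos : 0 < B' := lt_of_lt_of_le one_pos hB'1
  refine ⟨8 * B' ^ 2, by positivity, fun σ hσ t => ?_⟩
  set z : ℂ := 1/4 + (((σ:ℂ) + (t:ℂ)*I) + a)/2 with hz
  have hzre : z.re = 1/4 + (σ + a)/2 := by rw [hz, zarg_eq]; simp
  have hzim : z.im = t/2 := by rw [hz, zarg_eq]; simp
  have hσ1 := hσ.1
  have hσ2 := hσ.2
  have hrepos : 0 < z.re := by rw [hzre]; linarith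
  have hmem : z.re ∈ Icc (1/4 + c/2) (1/4 + (A + a)/2 + 1) := by
    rw [hzre]; constructor <;> linarith
  have hmem1 : z.re + 1 ∈ Icc (1/4 + c/2) (1/4 + (A + a)/2 + 1) := by
    rw [hzre]; constructor <;> linarith
  have hG1 : Real.Gamma z.re ≤ B' := le_trans (le_trans (le_abs_self _) (hB _ hmem)) (le_max_left _ _)
  have hG2 : Real.Gamma (z.re + 1) ≤ B' :=
    le_trans (le_trans (le_abs_self _) (hB _ hmem1)) (le_max_left _ _)
  have habs : 0 ≤ ‖Complex.Gamma z‖ := norm_nonneg _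
  rcases le_or_gt (t^2) 1 with ht | ht
  · have h1 : ‖Complex.Gamma z‖ ≤ B' := le_trans (abs_Gamma_le hrepos) hG1
    have h2 : (‖Complex.Gamma z‖)^2 ≤ B'^2 := by nlinarith
    rw [le_div_iff₀ (by positivity)]
    nlinarith [sq_nonneg t, sq_nonneg B']
  · have htne : t ≠ 0 := fun h => by rw [h] at ht; norm_num at ht
    have himne : z.im ≠ 0 := by rw [hzim]; simpa using htne
    have himpos : 0 < |z.im| := abs_pos.mpr himne
    have h1 : ‖Complex.Gamma z‖ ≤ B' / |z.im| :=
      le_trans (abs_Gamma_le_div hrepos himne) (by gcongr)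
    have him : |z.im| = |t|/2 := by rw [hzim, abs_div]; norm_num
    rw [him] at h1
    have htpos : 0 < t^2 := by nlinarith
    have htabs : 0 < |t| := abs_pos.mpr htne
    have h2 : (‖Complex.Gamma z‖)^2 ≤ (B' / (|t|/2))^2 :=
      pow_le_pow_left₀ habs h1 2
    have h3 : (B' / (|t|/2))^2 = 4 * B'^2 / t^2 := by
      rw [div_pow, ← _root_.sq_abs t]; ring
    rw [h3] at h2
    refine le_trans h2 ?_
    rw [div_le_div_iff₀ htpos (by positivity)]
    nlinarith [sq_nonneg B']

lemma re_aux (a : ℕ) (w : ℂ) : (1/4 + (w + a)/2).re = 1/4 + (w.re + a)/2 := by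
  have h : (1/4 + (w + a)/2 : ℂ) = w/2 + ((1/4 + a/2 : ℝ) : ℂ) := by push_cast; ring
  rw [h]
  simp [Complex.add_re, Complex.div_re]
  ring

lemma gfun_diff (a : ℕ) {x : ℝ} (hx : 0 < x) {w : ℂ} (hw : 0 < w.re) :
    DifferentiableAt ℂ (gfun a x) w := by
  have hwne : w ≠ 0 := fun h => by simp [h] at hw
  have hG : DifferentiableAt ℂ (fun w : ℂ => Complex.Gamma (1/4 + (w + a)/2)) w := by
    have hinner : DifferentiableAt ℂ (fun w : ℂ => 1/4 + (w + (a:ℂ))/2) w := by fun_prop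
    refine (Complex.differentiableAt_Gamma _ (fun m => ?_)).comp w hinner
    intro h
    have h2 := congrArg Complex.re h
    rw [re_aux] at h2
    simp only [Complex.neg_re, Complex.natCast_re] at h2
    have h3 : (0:ℝ) ≤ (a:ℝ) := Nat.cast_nonneg a
    have h4 : (0:ℝ) ≤ (m:ℝ) := Nat.cast_nonneg m
    linarith
  have hcp : DifferentiableAt ℂ (fun w : ℂ => (x:ℂ) ^ w) w :=
    differentiableAt_id.const_cpow (Or.inl (by exact_mod_cast hx.ne'))
  exact ((hG.pow 2).mul hcp).div differentiableAt_id hwne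

lemma gfun_norm (a : ℕ) {x : ℝ} (hx : 0 < x) (w : ℂ) :
    ‖gfun a x w‖ = (‖Complex.Gamma (1/4 + (w + a)/2)‖)^2
      * x ^ w.re / ‖w‖ := by
  rw [gfun, norm_div, norm_mul, norm_pow,
    Complex.norm_cpow_eq_rpow_re_of_pos hx]

lemma gfun_bound (c A : ℝ) (hc : 0 < c) (a : ℕ) {x : ℝ} (hx : 0 < x)
    {M : ℝ} (hM0 : 0 < M)
    (hM : ∀ σ ∈ Icc c A, ∀ t : ℝ,
      (‖Complex.Gamma (1/4 + (((σ:ℂ) + (t:ℂ)*I) + a)/2)‖)^2 ≤ M / (1 + t^2))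
    {σ : ℝ} (hσ : σ ∈ Icc c A) (t : ℝ) :
    ‖gfun a x ((σ:ℂ) + (t:ℂ)*I)‖ ≤ (M * x ^ σ / c) * (1 + t^2)⁻¹ := by
  have hre : ((σ:ℂ) + (t:ℂ)*I).re = σ := by simp
  have habsw : c ≤ ‖(σ:ℂ) + (t:ℂ)*I‖ := by
    refine le_trans ?_ (Complex.abs_re_le_norm _)
    rw [hre, abs_of_pos (lt_of_lt_of_le hc hσ.1)]
    exact hσ.1
  have h1 : ‖gfun a x ((σ:ℂ) + (t:ℂ)*I)‖
      ≤ (M / (1 + t^2)) * x ^ σ / c := by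
    rw [gfun_norm a hx, hre]
    have h2 := hM σ hσ t
    have h3 := lt_of_lt_of_le hc habsw
    gcongr
  refine h1.trans (le_of_eq ?_)
  ring

lemma gfun_integrable (c A : ℝ) (hc : 0 < c) (a : ℕ) {x : ℝ} (hx : 0 < x)
    {M : ℝ} (hM0 : 0 < M)
    (hM : ∀ σ ∈ Icc c A, ∀ t : ℝ,
      (‖Complex.Gamma (1/4 + (((σ:ℂ) + (t:ℂ)*I) + a)/2)‖)^2 ≤ M / (1 + t^2))
    {σ : ℝ} (hσ : σ ∈ Icc c A) :
    Integrable (fun t : ℝ => gfun a x ((σ:ℂ) + (t:ℂ)*I)) := by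
  have hσ0 : 0 < σ := hc.trans_le hσ.1
  have hcont : Continuous (fun t : ℝ => gfun a x ((σ:ℂ) + (t:ℂ)*I)) := by
    rw [continuous_iff_continuousAt]
    intro t
    have h1 : ContinuousAt (gfun a x) ((σ:ℂ) + (t:ℂ)*I) := by
      refine (gfun_diff a hx ?_).continuousAt
      simpa using hσ0
    have hmap : Continuous (fun t : ℝ => (σ:ℂ) + (t:ℂ)*I) := by fun_prop
    exact ContinuousAt.comp (g := gfun a x) (f := fun t : ℝ => (σ:ℂ) + (t:ℂ)*I) h1 hmap.continuousAt
  refine (Integrable.const_mul integrable_inv_one_add_sq ((M * x ^ σ) / c)).mono'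
    hcont.aestronglyMeasurable ?_
  filter_upwards with t
  exact gfun_bound c A hc a hx hM0 hM hσ t

lemma gfun_shift (c A : ℝ) (hc : 0 < c) (hcA : c ≤ A) (a : ℕ) {x : ℝ} (hx : 0 < x) (hx1 : x < 1)
    {M : ℝ} (hM0 : 0 < M)
    (hM : ∀ σ ∈ Icc c A, ∀ t : ℝ,
      (‖Complex.Gamma (1/4 + (((σ:ℂ) + (t:ℂ)*I) + a)/2)‖)^2 ≤ M / (1 + t^2)) :
    ∫ t : ℝ, gfun a x ((c:ℂ) + (t:ℂ)*I) = ∫ t : ℝ, gfun a x ((A:ℂ) + (t:ℂ)*I) := by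
  have hIc := gfun_integrable c A hc a hx hM0 hM (left_mem_Icc.mpr hcA)
  have hIA := gfun_integrable c A hc a hx hM0 hM (right_mem_Icc.mpr hcA)
  have hTc : Tendsto (fun T : ℝ => ∫ t in -T..T, gfun a x ((c:ℂ) + (t:ℂ)*I)) atTop
      (𝓝 (∫ t : ℝ, gfun a x ((c:ℂ) + (t:ℂ)*I))) :=
    intervalIntegral_tendsto_integral hIc tendsto_neg_atTop_atBot tendsto_id
  have hTA : Tendsto (fun T : ℝ => ∫ t in -T..T, gfun a x ((A:ℂ) + (t:ℂ)*I)) atTop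
      (𝓝 (∫ t : ℝ, gfun a x ((A:ℂ) + (t:ℂ)*I))) :=
    intervalIntegral_tendsto_integral hIA tendsto_neg_atTop_atBot tendsto_id
  -- rectangle identity
  have key : ∀ T : ℝ,
      I * ((∫ t in -T..T, gfun a x ((A:ℂ) + (t:ℂ)*I)) - ∫ t in -T..T, gfun a x ((c:ℂ) + (t:ℂ)*I))
      = (∫ r in c..A, gfun a x ((r:ℂ) + ((T:ℝ):ℂ)*I))
        - ∫ r in c..A, gfun a x ((r:ℂ) + ((-T:ℝ):ℂ)*I) := by
    intro T
    have H : DifferentiableOn ℂ (gfun a x)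
        ((Set.uIcc ((c:ℂ) + ((-T:ℝ):ℂ)*I).re ((A:ℂ) + ((T:ℝ):ℂ)*I).re) ×ℂ
          (Set.uIcc ((c:ℂ) + ((-T:ℝ):ℂ)*I).im ((A:ℂ) + ((T:ℝ):ℂ)*I).im)) := by
      intro w hw
      rw [Complex.mem_reProdIm] at hw
      have h1 : w.re ∈ Set.uIcc c A := by simpa using hw.1
      rw [Set.uIcc_of_le hcA] at h1
      exact (gfun_diff a hx (hc.trans_le h1.1)).differentiableWithinAt
    have h0 := Complex.integral_boundary_rect_eq_zero_of_differentiableOn (gfun a x)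
      ((c:ℂ) + ((-T:ℝ):ℂ)*I) ((A:ℂ) + ((T:ℝ):ℂ)*I) H
    simp only [Complex.add_re, Complex.add_im, Complex.ofReal_re, Complex.ofReal_im,
      Complex.mul_re, Complex.mul_im, Complex.I_re, Complex.I_im, mul_zero, mul_one,
      zero_mul, sub_zero, add_zero, zero_add, zero_sub, smul_eq_mul] at h0
    linear_combination h0
  -- horizontal integrals tend to zero
  have hbound : ∀ T : ℝ, ∀ σ ∈ Set.uIoc c A, ∀ t : ℝ,
      ‖gfun a x ((σ:ℂ) + (t:ℂ)*I)‖ ≤ (M * x ^ c / c) * (1 + t^2)⁻¹ := by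
    intro T σ hσ t
    rw [Set.uIoc_of_le hcA] at hσ
    have hσ' : σ ∈ Icc c A := ⟨hσ.1.le, hσ.2⟩
    refine (gfun_bound c A hc a hx hM0 hM hσ' t).trans ?_
    have hxσ : x ^ σ ≤ x ^ c := Real.rpow_le_rpow_of_exponent_ge hx hx1.le hσ.1.le
    have h1 : (0:ℝ) < 1 + t^2 := by positivity
    gcongr
  have hzero : Tendsto (fun T : ℝ =>
      I * ((∫ t in -T..T, gfun a x ((A:ℂ) + (t:ℂ)*I))
        - ∫ t in -T..T, gfun a x ((c:ℂ) + (t:ℂ)*I))) atTop (𝓝 0) := by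
    have hb2 : ∀ T : ℝ, ‖I * ((∫ t in -T..T, gfun a x ((A:ℂ) + (t:ℂ)*I))
        - ∫ t in -T..T, gfun a x ((c:ℂ) + (t:ℂ)*I))‖
        ≤ 2 * ((M * x ^ c / c) * (1 + T^2)⁻¹ * |A - c|) := by
      intro T
      rw [key T]
      have hT1 : ‖∫ r in c..A, gfun a x ((r:ℂ) + ((T:ℝ):ℂ)*I)‖
          ≤ (M * x ^ c / c) * (1 + T^2)⁻¹ * |A - c| :=
        intervalIntegral.norm_integral_le_of_norm_le_const
          (fun r hr => hbound T r hr T)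
      have hT2 : ‖∫ r in c..A, gfun a x ((r:ℂ) + ((-T:ℝ):ℂ)*I)‖
          ≤ (M * x ^ c / c) * (1 + (-T)^2)⁻¹ * |A - c| :=
        intervalIntegral.norm_integral_le_of_norm_le_const
          (fun r hr => hbound T r hr (-T))
      rw [neg_sq] at hT2
      calc ‖(∫ r in c..A, gfun a x ((r:ℂ) + ((T:ℝ):ℂ)*I))
            - ∫ r in c..A, gfun a x ((r:ℂ) + ((-T:ℝ):ℂ)*I)‖
          ≤ ‖∫ r in c..A, gfun a x ((r:ℂ) + ((T:ℝ):ℂ)*I)‖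
            + ‖∫ r in c..A, gfun a x ((r:ℂ) + ((-T:ℝ):ℂ)*I)‖ := norm_sub_le _ _
        _ ≤ 2 * ((M * x ^ c / c) * (1 + T^2)⁻¹ * |A - c|) := by linarith
    refine squeeze_zero_norm hb2 ?_
    have h3 : Tendsto (fun T : ℝ => (1 + T^2)⁻¹) atTop (𝓝 0) := by
      apply tendsto_inv_atTop_zero.comp
      exact tendsto_atTop_add_const_left _ 1 (tendsto_pow_atTop two_ne_zero)
    have h4 : Tendsto (fun T : ℝ => 2 * ((M * x ^ c / c) * (1 + T^2)⁻¹ * |A - c|)) atTop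
        (𝓝 (2 * ((M * x ^ c / c) * 0 * |A - c|))) := by
      exact (((h3.const_mul _).mul_const _).const_mul _)
    simpa using h4
  have := tendsto_nhds_unique ((hTA.sub hTc).const_mul I) hzero
  have h2 : (∫ t : ℝ, gfun a x ((A:ℂ) + (t:ℂ)*I)) - ∫ t : ℝ, gfun a x ((c:ℂ) + (t:ℂ)*I) = 0 := by
    rcases mul_eq_zero.mp this with h | h
    · exact absurd h Complex.I_ne_zero
    · exact h
  rw [sub_eq_zero] at h2
  exact h2.symm

end WfunAux

/-- **Behaviour of `W_a(x)` for `0 < x < 1`:** for every `k > 0` there is `C(k)` with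
`|W_a(x)| ≤ C(k) x^k` for all `0 < x < 1`. -/
theorem Wfun_small (c : ℝ) (hc : 1 / 2 < c) (a : ℕ) (ha : a = 0 ∨ a = 1)
    (k : ℝ) (hk : 0 < k) :
    ∃ C : ℝ, 0 < C ∧ ∀ x : ℝ, 0 < x → x < 1 →
      ‖Wfun c a x‖ ≤ C * x ^ k := by
  set A : ℝ := max c k + 1 with hA
  have hcA : c ≤ A := le_trans (le_max_left c k) (by linarith)
  have hkA : k ≤ A := le_trans (le_max_right c k) (by linarith)
  have hc0 : (0:ℝ) < c := by linarith
  obtain ⟨M, hM0, hM⟩ := strip_bound c A hc0 hcA a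
  set Γ₀ : ℂ := Complex.Gamma (1/4 + (a:ℂ)/2) with hΓ₀def
  have hΓ₀ : Γ₀ ≠ 0 := by
    rw [hΓ₀def]
    apply Complex.Gamma_ne_zero
    intro m h
    have h2 := congrArg Complex.re h
    have h3 : (1/4 + (a:ℂ)/2) = ((1/4 + (a:ℝ)/2 : ℝ) : ℂ) := by push_cast; ring
    rw [h3, Complex.ofReal_re, Complex.neg_re, Complex.natCast_re] at h2
    have h4 : (0:ℝ) ≤ (a:ℝ) := Nat.cast_nonneg a
    have h5 : (0:ℝ) ≤ (m:ℝ) := Nat.cast_nonneg m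
    linarith
  have hΓ₀pos : 0 < ‖Γ₀‖ := norm_pos_iff.mpr hΓ₀
  refine ⟨M * Real.pi / c / (2 * Real.pi * (‖Γ₀‖)^2) + 1, by positivity,
    fun x hx hx1 => ?_⟩
  have hint_eq : (fun t : ℝ =>
      (Complex.Gamma (1 / 4 + (((c : ℂ) + t * Complex.I) + a) / 2)) ^ 2 /
        (Complex.Gamma (1 / 4 + (a : ℂ) / 2)) ^ 2 *
        (x : ℂ) ^ ((c : ℂ) + t * Complex.I) / ((c : ℂ) + t * Complex.I))
      = fun t : ℝ => gfun a x ((c:ℂ) + (t:ℂ)*I) * (Γ₀^2)⁻¹ := by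
    funext t
    rw [gfun, hΓ₀def]
    ring
  have hW : Wfun c a x = ((1 / (2 * Real.pi) : ℝ) : ℂ) *
      ((∫ t : ℝ, gfun a x ((c:ℂ) + (t:ℂ)*I)) * (Γ₀^2)⁻¹) := by
    rw [Wfun, hint_eq, MeasureTheory.integral_mul_const]
  rw [hW, norm_mul, norm_mul, norm_inv, norm_pow]
  have habs1 : ‖((1 / (2 * Real.pi) : ℝ) : ℂ)‖ = 1/(2*Real.pi) := by
    rw [Complex.norm_real, Real.norm_eq_abs, abs_of_pos (by positivity)]
  rw [habs1, gfun_shift c A hc0 hcA a hx hx1 hM0 hM]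
  have hle : ‖∫ t : ℝ, gfun a x ((A:ℂ) + (t:ℂ)*I)‖ ≤ (M * x^A / c) * Real.pi := by
    refine le_trans (MeasureTheory.norm_integral_le_of_norm_le
      (integrable_inv_one_add_sq.const_mul (M * x^A / c)) ?_) (le_of_eq ?_)
    · filter_upwards with t
      exact gfun_bound c A hc0 a hx hM0 hM (Set.right_mem_Icc.mpr hcA) t
    · rw [MeasureTheory.integral_const_mul, integral_univ_inv_one_add_sq]
  have hxA : (0:ℝ) < x ^ A := Real.rpow_pos_of_pos hx A
  have hxk : (0:ℝ) < x ^ k := Real.rpow_pos_of_pos hx k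
  have hxAk : x ^ A ≤ x ^ k := Real.rpow_le_rpow_of_exponent_ge hx hx1.le hkA
  have hπ : (0:ℝ) < Real.pi := Real.pi_pos
  calc 1/(2*Real.pi) * (‖∫ t : ℝ, gfun a x ((A:ℂ) + (t:ℂ)*I)‖
        * ((‖Γ₀‖)^2)⁻¹)
      ≤ 1/(2*Real.pi) * ((M * x^A / c) * Real.pi) * ((‖Γ₀‖)^2)⁻¹ := by
        rw [← mul_assoc]; gcongr
    _ = (M * Real.pi / c / (2 * Real.pi * (‖Γ₀‖)^2)) * x ^ A := by
        field_simp
    _ ≤ (M * Real.pi / c / (2 * Real.pi * (‖Γ₀‖)^2)) * x ^ k := by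
        gcongr
    _ ≤ (M * Real.pi / c / (2 * Real.pi * (‖Γ₀‖)^2) + 1) * x ^ k := by
        gcongr
        linarith
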